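/- arXiv:0710.2836 — 2 statements merged into one kernel-verified Lean document; each statement's English description precedes it below -/
import Mathlib

section
/- Let (M, d) be a compact metric space, f : M → M a minimal homeomorphism, ε > 0, and L ∈ ℕ such that for all x, y ∈ M there exists an integer l with 0 ≤ l ≤ L and f^l(y) ∈ B(x, ε). Then for every f-ergodic Borel probability measure μ and every x ∈ M, μ(B(x, ε)) ≥ 1/(L+1) > 0. -/
open MeasureTheory

/-- Let `(M, d)` be a compact metric space, `f : M → M` a minimal
homeomorphism, `ε > 0`, and `L ∈ ℕ` such that for all `x, y ∈ M` there exists `0 ≤ l ≤ L`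
with `f^[l] y ∈ B(x, ε)`. Then for every `f`-ergodic Borel probability measure `μ` and every
`x ∈ M`, `μ(B(x, ε)) ≥ 1/(L+1) > 0`. -/
theorem ergodic_measure_ball_lower_bound {M : Type*} [MetricSpace M] [CompactSpace M]
    [MeasurableSpace M] [BorelSpace M]
    (f : Homeomorph M M)
    (hmin : ∀ y : M, Dense {z : M | ∃ n : ℕ, (⇑f)^[n] y = z})
    (ε : ℝ) (hε : 0 < ε) (L : ℕ)
    (hL : ∀ x y : M, ∃ l : ℕ, l ≤ L ∧ (⇑f)^[l] y ∈ Metric.ball x ε)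
    (μ : Measure M) [IsProbabilityMeasure μ] (herg : Ergodic (⇑f) μ) (x : M) :
    ((L : ENNReal) + 1)⁻¹ ≤ μ (Metric.ball x ε) ∧ 0 < ((L : ENNReal) + 1)⁻¹ := by
  constructor
  · have hmp : MeasurePreserving (⇑f) μ μ := herg.toMeasurePreserving
    have hcover : (Set.univ : Set M) ⊆ ⋃ l ∈ Finset.range (L + 1),
        (⇑f)^[l] ⁻¹' Metric.ball x ε := by
      intro y _
      obtain ⟨l, hl, hly⟩ := hL x y
      exact Set.mem_biUnion (Finset.mem_range.mpr (Nat.lt_succ_of_le hl)) hly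
    have h1 : (1 : ENNReal) ≤ (L + 1) * μ (Metric.ball x ε) := by
      calc (1 : ENNReal) = μ Set.univ := (measure_univ).symm
        _ ≤ μ (⋃ l ∈ Finset.range (L + 1), (⇑f)^[l] ⁻¹' Metric.ball x ε) :=
            measure_mono hcover
        _ ≤ ∑ l ∈ Finset.range (L + 1), μ ((⇑f)^[l] ⁻¹' Metric.ball x ε) :=
            measure_biUnion_finset_le _ _
        _ = ∑ l ∈ Finset.range (L + 1), μ (Metric.ball x ε) := by
            refine Finset.sum_congr rfl fun l _ => ?_
            exact (hmp.iterate l).measure_preimage Metric.isOpen_ball.measurableSet.nullMeasurableSet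
        _ = (L + 1) * μ (Metric.ball x ε) := by
            rw [Finset.sum_const, Finset.card_range, nsmul_eq_mul]
            push_cast
            ring
    rw [ENNReal.inv_le_iff_le_mul (by intro _; simp) (by simp)]
    simpa [mul_comm] using h1
  · simp [ENNReal.inv_pos]
end

section
/- Let X be a set, f : X → X a map, B ⊆ X, L ∈ ℕ, and y ∈ X. Suppose that for every n ≥ 0 there exists an integer l with 0 ≤ l ≤ L and f^{n+l}(y) ∈ B. Then liminf_{n→∞} (1/n) · card{ i : 0 ≤ i < n, f^i(y) ∈ B } ≥ 1/(L+1). -/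
open Filter

private lemma visit_count_key {X : Type*} (f : X → X) (B : Set X) (L : ℕ) (y : X)
    (h : ∀ n : ℕ, ∃ l : ℕ, l ≤ L ∧ f^[n + l] y ∈ B) (n : ℕ) :
    n / (L + 1) ≤ {i : ℕ | i < n ∧ f^[i] y ∈ B}.ncard := by
  set S : Set ℕ := {i : ℕ | i < n ∧ f^[i] y ∈ B} with hS
  set m := n / (L + 1) with hm
  set φ : ℕ → ℕ := fun j => j * (L + 1) + (h (j * (L + 1))).choose with hφ
  have hφle : ∀ j, (h (j * (L + 1))).choose ≤ L := fun j => (h (j * (L + 1))).choose_spec.1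
  have hφB : ∀ j, f^[φ j] y ∈ B := fun j => (h (j * (L + 1))).choose_spec.2
  have hmono : StrictMono φ := by
    apply strictMono_nat_of_lt_succ
    intro j
    have h1 : φ j ≤ j * (L + 1) + L := by
      simp only [hφ]; exact Nat.add_le_add_left (hφle j) _
    have h2 : (j + 1) * (L + 1) ≤ φ (j + 1) := Nat.le_add_right _ _
    have : j * (L + 1) + L < (j + 1) * (L + 1) := by ring_nf; omega
    omega
  have hSfin : S.Finite := (Set.finite_Iio n).subset (fun i hi => hi.1)
  have himg : φ '' (Set.Iio m) ⊆ S := by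
    rintro _ ⟨j, hj, rfl⟩
    refine ⟨?_, hφB j⟩
    have h1 : φ j ≤ j * (L + 1) + L := Nat.add_le_add_left (hφle j) _
    have h2 : (j + 1) * (L + 1) ≤ m * (L + 1) := Nat.mul_le_mul_right _ hj
    have h3 : m * (L + 1) ≤ n := by
      rw [hm, Nat.mul_comm]; exact Nat.mul_div_le n (L + 1)
    have : j * (L + 1) + L < (j + 1) * (L + 1) := by ring_nf; omega
    omega
  calc m = (Set.Iio m).ncard := by
          rw [← Finset.coe_range, Set.ncard_coe_finset, Finset.card_range]
    _ = (φ '' (Set.Iio m)).ncard :=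
          (Set.ncard_image_of_injective _ hmono.injective).symm
    _ ≤ S.ncard := Set.ncard_le_ncard himg hSfin

/-- Let `X` be a set, `f : X → X`, `B ⊆ X`, `L ∈ ℕ` and `y ∈ X`. Suppose
that for every `n ≥ 0` there exists `0 ≤ l ≤ L` with `f^[n+l] y ∈ B`. Then the lower density
of visit times of the orbit of `y` to `B` is at least `1/(L+1)`. -/
theorem liminf_visit_frequency {X : Type*} (f : X → X) (B : Set X) (L : ℕ) (y : X)
    (h : ∀ n : ℕ, ∃ l : ℕ, l ≤ L ∧ f^[n + l] y ∈ B) :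
    (1 : ℝ) / (L + 1) ≤
      Filter.liminf
        (fun n : ℕ => ({i : ℕ | i < n ∧ f^[i] y ∈ B}.ncard : ℝ) / n) Filter.atTop := by
  set a : ℕ → ℝ := fun n : ℕ => ({i : ℕ | i < n ∧ f^[i] y ∈ B}.ncard : ℝ) / n with ha
  set b : ℕ → ℝ := fun n : ℕ => (1 / ((L : ℝ) + 1)) * (1 - L / n) with hb
  have hL1 : (0 : ℝ) < (L : ℝ) + 1 := by positivity
  have hbt : Tendsto b atTop (nhds ((1 : ℝ) / (L + 1))) := by
    have h1 : Tendsto (fun n : ℕ => 1 - (L : ℝ) / n) atTop (nhds (1 - 0)) :=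
      tendsto_const_nhds.sub (tendsto_const_div_atTop_nhds_zero_nat (L : ℝ))
    rw [hb]
    simpa using h1.const_mul (1 / ((L : ℝ) + 1))
  have hba : ∀ᶠ n in atTop, b n ≤ a n := by
    filter_upwards [eventually_ge_atTop 1] with n hn
    have hn0 : (0 : ℝ) < n := by exact_mod_cast hn
    have hkey := visit_count_key f B L y h n
    have h1 : ((n / (L + 1) : ℕ) : ℝ) ≤ ({i : ℕ | i < n ∧ f^[i] y ∈ B}.ncard : ℝ) := by
      exact_mod_cast hkey
    have h2 : (n : ℝ) - L ≤ ((L : ℝ) + 1) * ((n / (L + 1) : ℕ) : ℝ) := by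
      have hdm : ((L + 1) * (n / (L + 1)) + n % (L + 1) : ℕ) = n := Nat.div_add_mod n (L + 1)
      have hmod : n % (L + 1) ≤ L := Nat.lt_succ_iff.mp (Nat.mod_lt n (Nat.succ_pos L))
      have hcast : ((L : ℝ) + 1) * ((n / (L + 1) : ℕ) : ℝ) + ((n % (L + 1) : ℕ) : ℝ) = n := by
        exact_mod_cast hdm
      have hmr : ((n % (L + 1) : ℕ) : ℝ) ≤ L := by exact_mod_cast hmod
      linarith
    show (1 / ((L : ℝ) + 1)) * (1 - L / n) ≤ ({i : ℕ | i < n ∧ f^[i] y ∈ B}.ncard : ℝ) / n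
    rw [le_div_iff₀ hn0]
    calc (1 / ((L : ℝ) + 1)) * (1 - L / n) * n = ((n : ℝ) - L) / (L + 1) := by
          field_simp
      _ ≤ ((n / (L + 1) : ℕ) : ℝ) := by rw [div_le_iff₀ hL1]; linarith
      _ ≤ _ := h1
  have hbbd : IsBoundedUnder (· ≥ ·) atTop b := hbt.isBoundedUnder_ge
  have haub : IsBoundedUnder (· ≤ ·) atTop a := by
    refine ⟨1, ?_⟩
    simp only [eventually_map, ha]
    filter_upwards with n
    rcases Nat.eq_zero_or_pos n with rfl | hn
    · simp
    · have hn0 : (0 : ℝ) < n := by exact_mod_cast hn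
      have hsub : {i : ℕ | i < n ∧ f^[i] y ∈ B} ⊆ Set.Iio n := fun i hi => hi.1
      have hc : {i : ℕ | i < n ∧ f^[i] y ∈ B}.ncard ≤ n := by
        have := Set.ncard_le_ncard hsub (Set.finite_Iio n)
        rwa [show (Set.Iio n).ncard = n by
          rw [← Finset.coe_range, Set.ncard_coe_finset, Finset.card_range]] at this
      rw [div_le_one hn0]
      exact_mod_cast hc
  have hacob : IsCoboundedUnder (· ≥ ·) atTop a := haub.isCoboundedUnder_ge
  calc (1 : ℝ) / (L + 1) = liminf b atTop := hbt.liminf_eq.symm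
    _ ≤ liminf a atTop := liminf_le_liminf hba hbbd hacob
end
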